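/- Transport along Grothendieck morphisms composes correctly in the Π-type construction: for a groupoid Γ, functors A : Γ ⥤ Grpd and B : ∫A ⥤ Grpd, and a morphism p : γ → γ' in Γ, the assignment Π(p) sending a functor τ : A γ ⥤ B_γ-union to the functor σ' ↦ (B applied to (p, id)).obj (τ.obj ((A p⁻¹).obj σ')) defines a map on objects such that Π(id_γ) = id and Π(p' ∘ p) = Π(p') ∘ Π(p), using functoriality of A and B. -/

import Mathlib

open CategoryTheory

variable {Γ : Type u} [Groupoid.{u} Γ] (A : Γ ⥤ Grpd.{u, u})
  (B : Grothendieck (A ⋙ Grpd.forgetToCat) ⥤ Grpd.{u, u})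

lemma piKey {γ γ' : Γ} (p : γ ⟶ γ') {σ₁ σ₂ : A.obj γ} (h : σ₁ = σ₂) {σ' : A.obj γ'}
    (h₁ : ((A ⋙ Grpd.forgetToCat).map p).toFunctor.obj σ₁ = σ')
    (h₂ : ((A ⋙ Grpd.forgetToCat).map p).toFunctor.obj σ₂ = σ')
    (τ : ∀ σ : A.obj γ, B.obj ⟨γ, σ⟩) :
    (B.map (⟨p, eqToHom h₁⟩ : (⟨γ, σ₁⟩ : Grothendieck (A ⋙ Grpd.forgetToCat)) ⟶ ⟨γ', σ'⟩)).obj (τ σ₁)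
    = (B.map (⟨p, eqToHom h₂⟩ : (⟨γ, σ₂⟩ : Grothendieck (A ⋙ Grpd.forgetToCat)) ⟶ ⟨γ', σ'⟩)).obj (τ σ₂) := by
  subst h; rfl

lemma piCompObj {x y z : Grothendieck (A ⋙ Grpd.forgetToCat)} (f : x ⟶ y) (g : y ⟶ z)
    (a : B.obj x) : (B.map g).obj ((B.map f).obj a) = (B.map (f ≫ g)).obj a := by
  rw [B.map_comp]; rfl

/-- Transport of the Π-type construction of the groupoid model along `p : γ ⟶ γ'`:
it sends a dependent object `τ` (assigning to each `σ : A γ` an object of `B (γ, σ)`)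
to `σ' ↦ (B.map (p, id)).obj (τ ((A p⁻¹).obj σ'))`. -/
def piTransport {γ γ' : Γ} (p : γ ⟶ γ')
    (τ : ∀ σ : A.obj γ, B.obj ⟨γ, σ⟩) :
    ∀ σ' : A.obj γ', B.obj ⟨γ', σ'⟩ :=
  fun σ' =>
    (B.map (⟨p, eqToHom (by
        calc (show A.obj γ' from ((A ⋙ Grpd.forgetToCat).map p).toFunctor.obj ((A.map (Groupoid.inv p)).obj σ'))
            = (A.map (Groupoid.inv p) ≫ A.map p).obj σ' := rfl
          _ = σ' := by rw [← A.map_comp, Groupoid.inv_comp, A.map_id]; rfl)⟩ :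
      (⟨γ, (A.map (Groupoid.inv p)).obj σ'⟩ : Grothendieck (A ⋙ Grpd.forgetToCat)) ⟶
        ⟨γ', σ'⟩)).obj
      (τ ((A.map (Groupoid.inv p)).obj σ'))

/-- Transport in the Π-type construction is functorial on objects:
`Π(id_γ) = id` and `Π(p' ∘ p) = Π(p') ∘ Π(p)`. -/
theorem stmt_16 :
    (∀ (γ : Γ) (τ : ∀ σ : A.obj γ, B.obj ⟨γ, σ⟩), piTransport A B (𝟙 γ) τ = τ) ∧
    (∀ (γ γ' γ'' : Γ) (p : γ ⟶ γ') (p' : γ' ⟶ γ'')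
      (τ : ∀ σ : A.obj γ, B.obj ⟨γ, σ⟩),
      piTransport A B (p ≫ p') τ = piTransport A B p' (piTransport A B p τ)) := by
  constructor
  · intro γ τ
    funext σ
    have h : (A.map (Groupoid.inv (𝟙 γ))).obj σ = σ := by
      have : Groupoid.inv (𝟙 γ) = 𝟙 γ := by
        rw [Groupoid.inv_eq_inv]; simp
      rw [this, A.map_id]; rfl
    have h₂ : ((A ⋙ Grpd.forgetToCat).map (𝟙 γ)).toFunctor.obj σ = σ := by
      show (A.map (𝟙 γ)).obj σ = σ
      rw [A.map_id]; rfl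
    refine (piKey A B (𝟙 γ) h _ h₂ τ).trans ?_
    have : (⟨𝟙 γ, eqToHom h₂⟩ :
        (⟨γ, σ⟩ : Grothendieck (A ⋙ Grpd.forgetToCat)) ⟶ ⟨γ, σ⟩)
        = 𝟙 (⟨γ, σ⟩ : Grothendieck (A ⋙ Grpd.forgetToCat)) := by
      apply Grothendieck.ext <;> simp [Grothendieck.id] <;> exact eqToHom_trans _ _
    rw [this, B.map_id]; rfl
  · intro γ γ' γ'' p p' τ
    funext σ''
    show _ = (B.map _).obj ((B.map _).obj _)
    rw [piCompObj]
    have h : (A.map (Groupoid.inv (p ≫ p'))).obj σ''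
        = (A.map (Groupoid.inv p)).obj ((A.map (Groupoid.inv p')).obj σ'') := by
      rw [Groupoid.inv_eq_inv, Groupoid.inv_eq_inv, Groupoid.inv_eq_inv, IsIso.inv_comp,
        A.map_comp]; rfl
    refine (piKey A B (p ≫ p') h _ ?_ τ).trans ?_
    · show (A.map (p ≫ p')).obj ((A.map (Groupoid.inv p)).obj ((A.map (Groupoid.inv p')).obj σ'')) = σ''
      have e : Groupoid.inv p' ≫ Groupoid.inv p ≫ p ≫ p' = 𝟙 γ'' := by
        simp
      calc (A.map (p ≫ p')).obj ((A.map (Groupoid.inv p)).obj ((A.map (Groupoid.inv p')).obj σ''))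
          = (A.map (Groupoid.inv p') ≫ A.map (Groupoid.inv p) ≫ A.map (p ≫ p')).obj σ'' := rfl
        _ = σ'' := by
            rw [← A.map_comp, ← A.map_comp, e, A.map_id]; rfl
    · refine congrArg (fun m => (B.map m).obj
        (τ ((A.map (Groupoid.inv p)).obj ((A.map (Groupoid.inv p')).obj σ'')))) ?_
      apply Grothendieck.ext <;> simp [Grothendieck.comp, eqToHom_map] <;> erw [eqToHom_map (Grpd.forgetToCat.map (A.map p')).toFunctor] <;> erw [eqToHom_trans, eqToHom_trans, eqToHom_trans]
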